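/- Let f : D^{n+1} → D be holomorphic, let φ be a holomorphic automorphism of the unit disk D, and suppose there exists z₀ ∈ Dⁿ such that f(z₀, w) = φ(w) for all w ∈ D. Then f(z,w) = φ(w) for all (z,w) ∈ D^{n+1}. -/

import Mathlib

open Metric Set

/-- The open unit polydisk in `ℂⁿ`. -/
def polyDisk (n : ℕ) : Set (Fin n → ℂ) := {z | ∀ i, ‖z i‖ < 1}

/-- `φ` is a holomorphic automorphism of the unit disk. -/
def IsDiskAut (φ : ℂ → ℂ) : Prop :=
  DifferentiableOn ℂ φ (ball (0 : ℂ) 1) ∧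
  MapsTo φ (ball (0 : ℂ) 1) (ball (0 : ℂ) 1) ∧
  ∃ ψ : ℂ → ℂ, DifferentiableOn ℂ ψ (ball (0 : ℂ) 1) ∧
    MapsTo ψ (ball (0 : ℂ) 1) (ball (0 : ℂ) 1) ∧
    (∀ w ∈ ball (0 : ℂ) 1, ψ (φ w) = w) ∧
    (∀ w ∈ ball (0 : ℂ) 1, φ (ψ w) = w)


open Complex Filter

/-- Schwarz–Pick at the origin. -/
lemma sp_deriv {g : ℂ → ℂ} (hd : DifferentiableOn ℂ g (ball 0 1))
    (hm : MapsTo g (ball 0 1) (ball 0 1)) :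
    ‖deriv g 0‖ ≤ 1 - ‖g 0‖ ^ 2 := by
  set a := g 0 with ha_def
  have ha : ‖a‖ < 1 := by
    simpa [mem_ball, dist_eq_norm] using hm (mem_ball_self one_pos)
  have key : ∀ ζ : ℂ, ‖ζ‖ < 1 →
      normSq (1 - (starRingEnd ℂ) a * ζ) - normSq (ζ - a) = (1 - normSq a) * (1 - normSq ζ) := by
    intro ζ _
    simp only [normSq_apply, Complex.sub_re, Complex.sub_im, Complex.mul_re, Complex.mul_im,
      Complex.one_re, Complex.one_im, Complex.conj_re, Complex.conj_im]
    ring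
  have hden : ∀ ζ : ℂ, ‖ζ‖ < 1 → 1 - (starRingEnd ℂ) a * ζ ≠ 0 := by
    intro ζ hζ h
    have : (starRingEnd ℂ) a * ζ = 1 := by linear_combination -h
    have h1 : ‖(starRingEnd ℂ) a * ζ‖ < 1 := by
      rw [norm_mul, RCLike.norm_conj]
      nlinarith [norm_nonneg a, norm_nonneg ζ]
    rw [this] at h1; simp at h1
  set B : ℂ → ℂ := fun ζ => (ζ - a) / (1 - (starRingEnd ℂ) a * ζ) with hB_def
  have hBmaps : ∀ ζ : ℂ, ‖ζ‖ < 1 → ‖B ζ‖ < 1 := by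
    intro ζ hζ
    have hA : normSq a = ‖a‖ ^ 2 := by rw [← Complex.sq_norm]
    have hZ : normSq ζ = ‖ζ‖ ^ 2 := by rw [← Complex.sq_norm]
    have hp : 0 < (1 - normSq a) * (1 - normSq ζ) := by
      apply mul_pos
      · rw [hA]; nlinarith [norm_nonneg a]
      · rw [hZ]; nlinarith [norm_nonneg ζ]
    have h1 : normSq (ζ - a) < normSq (1 - (starRingEnd ℂ) a * ζ) := by
      have := key ζ hζ; linarith
    rw [hB_def]
    have hd0 := hden ζ hζ
    rw [norm_div, div_lt_one (norm_pos_iff.mpr hd0)]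
    have := Real.sqrt_lt_sqrt (normSq_nonneg _) h1
    simpa [Complex.norm_def] using this
  -- derivative of B at a
  have hdenA : (1 : ℂ) - (starRingEnd ℂ) a * a ≠ 0 := hden a ha
  have hBder : HasDerivAt B ((1 - (starRingEnd ℂ) a * a)⁻¹) a := by
    have hnum : HasDerivAt (fun ζ : ℂ => ζ - a) 1 a := (hasDerivAt_id a).sub_const a
    have hden' : HasDerivAt (fun ζ : ℂ => 1 - (starRingEnd ℂ) a * ζ) (-(starRingEnd ℂ) a) a := by
      simpa using ((hasDerivAt_id a).const_mul ((starRingEnd ℂ) a)).const_sub 1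
    have := hnum.div hden' hdenA
    exact this.congr_deriv (by rw [sub_self, zero_mul, sub_zero, one_mul, sq, div_mul_cancel_right₀ hdenA])
  have hg0 : DifferentiableAt ℂ g 0 :=
    hd.differentiableAt (isOpen_ball.mem_nhds (mem_ball_self one_pos))
  have hcomp : HasDerivAt (B ∘ g) ((1 - (starRingEnd ℂ) a * a)⁻¹ * deriv g 0) 0 :=
    HasDerivAt.comp 0 (ha_def ▸ hBder) hg0.hasDerivAt
  have hBg_diff : DifferentiableOn ℂ (B ∘ g) (ball 0 1) := by
    apply DifferentiableOn.div (hd.sub_const a)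
      ((differentiableOn_const 1).sub (hd.const_mul _))
    intro w hw
    exact hden (g w) (by simpa [mem_ball, dist_eq_norm] using hm hw)
  have hBg_maps : MapsTo (B ∘ g) (ball 0 1) (ball 0 1) := by
    intro w hw
    simp only [Function.comp, mem_ball, dist_eq_norm, sub_zero]
    exact hBmaps (g w) (by simpa [mem_ball, dist_eq_norm] using hm hw)
  have hBg0 : (B ∘ g) 0 = 0 := by
    simp [Function.comp, hB_def, ← ha_def]
  have := Complex.norm_deriv_le_one_of_mapsTo_ball hBg_diff
    (by rw [hBg0]; exact hBg_maps.mono_right ball_subset_closedBall) one_pos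
  rw [hcomp.deriv] at this
  have hre : (1 : ℂ) - (starRingEnd ℂ) a * a = ((1 - ‖a‖ ^ 2 : ℝ) : ℂ) := by
    rw [mul_comm, Complex.mul_conj]
    push_cast [Complex.sq_norm]
    ring
  have hnorm : ‖(1 : ℂ) - (starRingEnd ℂ) a * a‖ = 1 - ‖a‖ ^ 2 := by
    rw [hre, Complex.norm_real, Real.norm_eq_abs, _root_.abs_of_nonneg (by nlinarith [norm_nonneg a])]
  calc ‖deriv g 0‖ = ‖(1 : ℂ) - (starRingEnd ℂ) a * a‖ *
        ‖(1 - (starRingEnd ℂ) a * a)⁻¹ * deriv g 0‖ := by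
        rw [← norm_mul]; congr 1; field_simp
    _ ≤ (1 - ‖a‖ ^ 2) * 1 := by
        rw [hnorm]; gcongr
        · nlinarith [norm_nonneg a]
    _ = 1 - ‖g 0‖ ^ 2 := by rw [mul_one, ← ha_def]

/-- Equality case: derivative of norm one at the origin forces a rotation. -/
lemma sp_eq {g : ℂ → ℂ} (hd : DifferentiableOn ℂ g (ball 0 1))
    (hm : MapsTo g (ball 0 1) (ball 0 1)) (h1 : ‖deriv g 0‖ = 1) :
    ∀ w ∈ ball (0 : ℂ) 1, g w = deriv g 0 * w := by
  have hg0 : g 0 = 0 := by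
    have := sp_deriv hd hm
    rw [h1] at this
    have : ‖g 0‖ ^ 2 ≤ 0 := by linarith
    have : ‖g 0‖ = 0 := by nlinarith [norm_nonneg (g 0)]
    simpa using this
  have hm' : MapsTo g (ball 0 1) (ball (g 0) 1) := by rwa [hg0]
  have h_eq : ‖dslope g 0 0‖ = 1 / 1 := by rwa [dslope_same, div_one]
  have haff := Complex.affine_of_mapsTo_ball_of_exists_norm_dslope_eq_div hd (hm'.mono_right ball_subset_closedBall)
    (mem_ball_self one_pos) h_eq
  intro w hw
  have := haff hw
  simpa [hg0, dslope_same, smul_eq_mul, mul_comm] using this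

/-- Uniform Schwarz-type bound on the difference slope. -/
lemma dslope_bound {g : ℂ → ℂ} (hd : DifferentiableOn ℂ g (ball 0 1))
    (hm : MapsTo g (ball 0 1) (ball 0 1)) {w : ℂ} (hw : w ∈ ball (0 : ℂ) 1) :
    ‖dslope g 0 w - deriv g 0‖ ≤ 5 * ‖w‖ := by
  set u : ℂ → ℂ := dslope g 0 with hu
  have hud : DifferentiableOn ℂ u (ball 0 1) :=
    (differentiableOn_dslope (isOpen_ball.mem_nhds (mem_ball_self one_pos))).mpr hd
  have hm2 : MapsTo g (ball 0 1) (ball (g 0) 2) := by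
    intro x hx
    have h1 : ‖g x‖ < 1 := by simpa [mem_ball, dist_eq_norm] using hm hx
    have h2 : ‖g 0‖ < 1 := by
      simpa [mem_ball, dist_eq_norm] using hm (mem_ball_self one_pos)
    rw [mem_ball, dist_eq_norm]
    calc ‖g x - g 0‖ ≤ ‖g x‖ + ‖g 0‖ := norm_sub_le _ _
      _ < 2 := by linarith
  have hub : ∀ x ∈ ball (0 : ℂ) 1, ‖u x‖ ≤ 2 := by
    intro x hx
    have := Complex.norm_dslope_le_div_of_mapsTo_ball hd (hm2.mono_right ball_subset_closedBall) hx
    simpa using this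
  have hum : MapsTo u (ball 0 1) (ball (u 0) 5) := by
    intro x hx
    rw [mem_ball, dist_eq_norm]
    calc ‖u x - u 0‖ ≤ ‖u x‖ + ‖u 0‖ := norm_sub_le _ _
      _ ≤ 2 + 2 := add_le_add (hub x hx) (hub 0 (mem_ball_self one_pos))
      _ < 5 := by norm_num
  have := Complex.dist_le_div_mul_dist_of_mapsTo_ball hud (hum.mono_right ball_subset_closedBall) hw
  rw [dist_eq_norm, dist_eq_norm, sub_zero] at this
  have hu0 : u 0 = deriv g 0 := dslope_same g 0
  rw [hu0] at this
  linarith [this]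

/-- The derivative at `0` of a holomorphic family of self-maps of the disk depends
holomorphically on the parameter. -/
lemma deriv_family_differentiable {T : Set ℂ} (hT : IsOpen T) {H : ℂ → ℂ → ℂ}
    (hd : ∀ t ∈ T, DifferentiableOn ℂ (H t) (ball 0 1))
    (hm : ∀ t ∈ T, MapsTo (H t) (ball 0 1) (ball 0 1))
    (hdt : ∀ w ∈ ball (0 : ℂ) 1, DifferentiableOn ℂ (fun t => H t w) T) :
    DifferentiableOn ℂ (fun t => deriv (H t) 0) T := by
  set wk : ℕ → ℂ := fun k => (((k : ℝ) + 2)⁻¹ : ℝ) with hwk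
  have hwk_norm : ∀ k, ‖wk k‖ = ((k : ℝ) + 2)⁻¹ := by
    intro k
    rw [hwk]
    rw [Complex.norm_real, Real.norm_eq_abs, abs_of_pos (by positivity)]
  have hwk_mem : ∀ k, wk k ∈ ball (0 : ℂ) 1 := by
    intro k
    rw [mem_ball, dist_zero_right, hwk_norm]
    rw [inv_lt_one_iff₀]
    right; linarith [Nat.cast_nonneg (α := ℝ) k]
  have hwk_ne : ∀ k, wk k ≠ 0 := by
    intro k
    rw [hwk]
    exact Complex.ofReal_ne_zero.mpr (by positivity)
  set F : ℕ → ℂ → ℂ := fun k t => (H t (wk k) - H t 0) / wk k with hF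
  have hFd : ∀ k, DifferentiableOn ℂ (F k) T := by
    intro k
    exact ((hdt (wk k) (hwk_mem k)).sub (hdt 0 (mem_ball_self one_pos))).div_const _
  have hFval : ∀ k, ∀ t ∈ T, F k t = dslope (H t) 0 (wk k) := by
    intro k t _
    rw [hF]
    simp only
    rw [dslope_of_ne _ (hwk_ne k)]
    rw [slope_def_field]
    simp [div_eq_mul_inv]
  have hbound : ∀ k, ∀ t ∈ T, ‖F k t - deriv (H t) 0‖ ≤ 5 * ((k:ℝ)+2)⁻¹ := by
    intro k t ht
    rw [hFval k t ht, ← hwk_norm k]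
    exact dslope_bound (hd t ht) (hm t ht) (hwk_mem k)
  have htend : TendstoUniformlyOn F (fun t => deriv (H t) 0) atTop T := by
    rw [Metric.tendstoUniformlyOn_iff]
    intro ε hε
    have h5 : Tendsto (fun k : ℕ => 5 * ((k:ℝ)+2)⁻¹) atTop (nhds 0) := by
      have : Tendsto (fun k : ℕ => ((k:ℝ)+2)) atTop atTop :=
        tendsto_atTop_add_const_right _ _ tendsto_natCast_atTop_atTop
      simpa using (tendsto_inv_atTop_zero.comp this).const_mul 5
    filter_upwards [(h5.eventually (eventually_lt_nhds hε))] with k hk t ht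
    rw [dist_comm, dist_eq_norm]
    exact lt_of_le_of_lt (hbound k t ht) hk
  exact htend.tendstoLocallyUniformlyOn.differentiableOn
    (Eventually.of_forall hFd) hT

/-- If a holomorphic one-parameter family of holomorphic self-maps of the disk is the
identity at the parameter `0`, it is the identity for every parameter. -/
lemma family_id {T : Set ℂ} (hT : IsOpen T) (hTp : IsPreconnected T) (h0 : (0 : ℂ) ∈ T)
    {H : ℂ → ℂ → ℂ}
    (hd : ∀ t ∈ T, DifferentiableOn ℂ (H t) (ball 0 1))
    (hm : ∀ t ∈ T, MapsTo (H t) (ball 0 1) (ball 0 1))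
    (hdt : ∀ w ∈ ball (0 : ℂ) 1, DifferentiableOn ℂ (fun t => H t w) T)
    (hid : ∀ w ∈ ball (0 : ℂ) 1, H 0 w = w) :
    ∀ t ∈ T, ∀ w ∈ ball (0 : ℂ) 1, H t w = w := by
  set V : ℂ → ℂ := fun t => deriv (H t) 0 with hV
  have hV0 : V 0 = 1 := by
    have heq : H 0 =ᶠ[nhds (0 : ℂ)] id := by
      filter_upwards [isOpen_ball.mem_nhds (mem_ball_self one_pos)] with w hw
      exact hid w hw
    rw [hV]
    simp only
    rw [heq.deriv_eq, deriv_id]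
  have hVle : ∀ t ∈ T, ‖V t‖ ≤ 1 := by
    intro t ht
    have := sp_deriv (hd t ht) (hm t ht)
    nlinarith [norm_nonneg (H t 0), sq_nonneg ‖H t 0‖]
  have hVd : DifferentiableOn ℂ V T := deriv_family_differentiable hT hd hm hdt
  have hmax : IsMaxOn (norm ∘ V) T 0 := by
    rw [isMaxOn_iff]
    intro t ht
    simpa [hV0] using hVle t ht
  have heq := Complex.eqOn_of_isPreconnected_of_isMaxOn_norm hTp hT hVd h0 hmax
  intro t ht w hw
  have hVt : V t = 1 := by
    have := heq ht
    simpa [hV0] using this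
  have hd1 : deriv (H t) 0 = 1 := hVt
  have := sp_eq (hd t ht) (hm t ht) (by rw [hd1]; simp)
  have := this w hw
  rw [hd1] at this
  simpa using this

lemma isOpen_polyDisk (n : ℕ) : IsOpen (polyDisk n) := by
  have : polyDisk n = ⋂ i, {z : Fin n → ℂ | ‖z i‖ < 1} := by
    ext z; simp [polyDisk]
  rw [this]
  exact isOpen_iInter_of_finite fun i =>
    isOpen_lt ((continuous_apply i).norm) continuous_const

theorem slice_automorphism_propagates (n : ℕ)
    (f : (Fin n → ℂ) × ℂ → ℂ)
    (hf : DifferentiableOn ℂ f (polyDisk n ×ˢ ball (0 : ℂ) 1))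
    (hmap : MapsTo f (polyDisk n ×ˢ ball (0 : ℂ) 1) (ball (0 : ℂ) 1))
    (φ : ℂ → ℂ) (hφ : IsDiskAut φ)
    (z₀ : Fin n → ℂ) (hz₀ : z₀ ∈ polyDisk n)
    (hslice : ∀ w ∈ ball (0 : ℂ) 1, f (z₀, w) = φ w) :
    ∀ z ∈ polyDisk n, ∀ w ∈ ball (0 : ℂ) 1, f (z, w) = φ w := by
  obtain ⟨hφd, hφm, ψ, hψd, hψm, hψφ, hφψ⟩ := hφ
  intro z hz w hw
  -- the composition with the inverse automorphism
  set h : (Fin n → ℂ) × ℂ → ℂ := fun p => ψ (f p) with hh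
  have hhd : DifferentiableOn ℂ h (polyDisk n ×ˢ ball 0 1) := hψd.comp hf hmap
  have hhm : MapsTo h (polyDisk n ×ˢ ball 0 1) (ball 0 1) := fun p hp => hψm (hmap hp)
  -- the complex line through z₀ and z
  set γ : ℂ → Fin n → ℂ := fun t i => z₀ i + t * (z i - z₀ i) with hγ
  have hγ0 : γ 0 = z₀ := by funext i; simp [hγ]
  have hγ1 : γ 1 = z := by funext i; simp [hγ]
  set T : Set ℂ := γ ⁻¹' polyDisk n with hT_def
  have hγc : Continuous γ :=
    continuous_pi fun i => continuous_const.add (continuous_id.mul continuous_const)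
  have hT : IsOpen T := (isOpen_polyDisk n).preimage hγc
  have hTconv : Convex ℝ T := by
    intro t₁ h₁ t₂ h₂ a b ha hb hab
    intro i
    have hab' : (a : ℂ) + (b : ℂ) = 1 := by exact_mod_cast hab
    have hkey : γ (a • t₁ + b • t₂) i = (a : ℂ) * γ t₁ i + (b : ℂ) * γ t₂ i := by
      simp only [hγ, Complex.real_smul]
      linear_combination (-(z₀ i)) * hab'
    rw [hkey]
    have n1 := h₁ i
    have n2 := h₂ i
    calc ‖(a : ℂ) * γ t₁ i + (b : ℂ) * γ t₂ i‖
        ≤ ‖(a : ℂ) * γ t₁ i‖ + ‖(b : ℂ) * γ t₂ i‖ := norm_add_le _ _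
      _ = a * ‖γ t₁ i‖ + b * ‖γ t₂ i‖ := by
          rw [norm_mul, norm_mul, Complex.norm_real, Complex.norm_real,
            Real.norm_eq_abs, Real.norm_eq_abs, _root_.abs_of_nonneg ha, _root_.abs_of_nonneg hb]
      _ ≤ a * max ‖γ t₁ i‖ ‖γ t₂ i‖ + b * max ‖γ t₁ i‖ ‖γ t₂ i‖ := by
          gcongr
          exacts [le_max_left _ _, le_max_right _ _]
      _ = max ‖γ t₁ i‖ ‖γ t₂ i‖ := by rw [← add_mul, hab, one_mul]
      _ < 1 := max_lt n1 n2
  have h0T : (0 : ℂ) ∈ T := by rw [hT_def, mem_preimage, hγ0]; exact hz₀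
  have h1T : (1 : ℂ) ∈ T := by rw [hT_def, mem_preimage, hγ1]; exact hz
  -- the family
  set H : ℂ → ℂ → ℂ := fun t w => h (γ t, w) with hH
  have hγdiff : Differentiable ℂ γ := by
    rw [hγ]
    exact differentiable_pi.mpr fun i =>
      (differentiable_id.mul_const _).const_add _
  have hmemP : ∀ t ∈ T, ∀ w ∈ ball (0 : ℂ) 1, (γ t, w) ∈ polyDisk n ×ˢ ball (0 : ℂ) 1 :=
    fun t ht w hw => ⟨ht, hw⟩
  have hd : ∀ t ∈ T, DifferentiableOn ℂ (H t) (ball 0 1) := by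
    intro t ht
    apply hhd.comp
    · exact ((differentiable_const (γ t)).prodMk differentiable_id).differentiableOn
    · exact fun w hw => hmemP t ht w hw
  have hm : ∀ t ∈ T, MapsTo (H t) (ball 0 1) (ball 0 1) :=
    fun t ht w hw => hhm (hmemP t ht w hw)
  have hdt : ∀ w ∈ ball (0 : ℂ) 1, DifferentiableOn ℂ (fun t => H t w) T := by
    intro w hw
    apply hhd.comp
    · exact (hγdiff.prodMk (differentiable_const w)).differentiableOn
    · exact fun t ht => hmemP t ht w hw
  have hid : ∀ w ∈ ball (0 : ℂ) 1, H 0 w = w := by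
    intro w hw
    rw [hH]
    simp only [hγ0, hh]
    rw [hslice w hw]
    exact hψφ w hw
  have := family_id hT hTconv.isPreconnected h0T hd hm hdt hid 1 h1T w hw
  rw [hH] at this
  simp only [hγ1, hh] at this
  -- this : ψ (f (z, w)) = w
  have hfz : f (z, w) ∈ ball (0 : ℂ) 1 := hmap ⟨hz, hw⟩
  calc f (z, w) = φ (ψ (f (z, w))) := (hφψ _ hfz).symm
    _ = φ w := by rw [this]
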